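/- Let R be a henselian discrete valuation ring whose residue field κ has characteristic not 2 and satisfies cd₂(κ) ≤ 1 (equivalently: every conic x² − αy² = β with α, β ∈ κ× has a κ-point). Let d ∈ K× with v(d) even and d not a square in K. Then the nonzero values of x² − d·y² for x, y ∈ K are exactly the elements of K× that are a unit times a square. -/

import Mathlib

open IsLocalRing Polynomial

section
variable {R : Type*} [CommRing R] [IsDomain R] [HenselianLocalRing R]

/-- Hensel's lemma for square roots. -/
lemma aux_hensel_sqrt (h2 : (2 : ResidueField R) ≠ 0) (c a₀ : R)
    (h : residue R a₀ ^ 2 = residue R c) (ha : residue R a₀ ≠ 0) :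
    ∃ a : R, a ^ 2 = c := by
  obtain ⟨a, har, -⟩ := HenselianLocalRing.is_henselian (X ^ 2 - C c)
    (monic_X_pow_sub_C c two_ne_zero) a₀
    (by
      show _ ∈ _
      rw [← Ideal.Quotient.eq_zero_iff_mem]
      show residue R _ = 0
      simp only [eval_sub, eval_pow, eval_X, eval_C, map_sub, map_pow, h, sub_self])
    (by
      rw [← residue_ne_zero_iff_isUnit]
      have : derivative (X ^ 2 - C c) = C 2 * X := by
        simp [derivative_sub, derivative_X_pow]; rw [← C_1, ← C_add, one_add_one_eq_two]
      rw [this]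
      simp only [eval_mul, eval_C, eval_X, map_mul]
      exact mul_ne_zero (by rwa [map_ofNat]) ha)
  refine ⟨a, ?_⟩
  have := har
  simp only [IsRoot, eval_sub, eval_pow, eval_X, eval_C, sub_eq_zero] at this
  exact this

end

section
set_option linter.unusedSectionVars false
variable {R : Type*} [CommRing R] [IsDomain R] [HenselianLocalRing R]

/-- Every unit is represented by `x² - u y²`. -/
lemma aux_rep_unit (h2 : (2 : ResidueField R) ≠ 0)
    (hcd : ∀ α β : ResidueField R, α ≠ 0 → β ≠ 0 →
      ∃ x y : ResidueField R, x ^ 2 - α * y ^ 2 = β)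
    (u w : Rˣ) : ∃ x y : R, x ^ 2 - (u : R) * y ^ 2 = (w : R) := by
  have hu : residue R (u : R) ≠ 0 := residue_ne_zero_iff_isUnit _ |>.mpr u.isUnit
  have hw : residue R (w : R) ≠ 0 := residue_ne_zero_iff_isUnit _ |>.mpr w.isUnit
  obtain ⟨xb, yb, hxy⟩ := hcd _ _ hu hw
  obtain ⟨y₀, rfl⟩ := Ideal.Quotient.mk_surjective yb
  rw [show Ideal.Quotient.mk (maximalIdeal R) y₀ = residue R y₀ from rfl] at hxy
  by_cases hx : xb = 0
  · rw [hx] at hxy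
    have hy : residue R y₀ ≠ 0 := by
      intro h0; rw [h0] at hxy; simp at hxy; exact hw hxy.symm
    have huinv : residue R ((u⁻¹ : Rˣ) : R) * residue R (u : R) = 1 := by
      rw [← map_mul, Units.inv_mul, map_one]
    have hside : residue R y₀ ^ 2 = residue R (-(((u⁻¹ : Rˣ) : R) * (w : R))) := by
      rw [map_neg, map_mul]
      linear_combination (-(residue R y₀ ^ 2)) * huinv
        + (-(residue R ((u⁻¹ : Rˣ) : R))) * hxy
    obtain ⟨y, hy2⟩ := aux_hensel_sqrt h2 (-(((u⁻¹ : Rˣ) : R) * (w : R))) y₀ hside hy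
    refine ⟨0, y, ?_⟩
    rw [hy2]
    have h1 : (u : R) * ((u⁻¹ : Rˣ) : R) = 1 := Units.mul_inv u
    linear_combination (w : R) * h1
  · obtain ⟨x₀, hx₀⟩ := Ideal.Quotient.mk_surjective xb
    rw [show Ideal.Quotient.mk (maximalIdeal R) x₀ = residue R x₀ from rfl] at hx₀
    rw [← hx₀] at hxy hx
    have hside : residue R x₀ ^ 2 = residue R ((u : R) * y₀ ^ 2 + (w : R)) := by
      rw [map_add, map_mul, map_pow]
      linear_combination hxy
    obtain ⟨x, hx2⟩ := aux_hensel_sqrt h2 ((u : R) * y₀ ^ 2 + (w : R)) x₀ hside hx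
    exact ⟨x, y₀, by rw [hx2]; ring⟩

end

section
set_option linter.unusedSectionVars false
variable {R K : Type*} [CommRing R] [IsDomain R] [IsDiscreteValuationRing R]
  [Field K] [Algebra R K] [IsFractionRing R K]

lemma aux_decomp {π : R} (hπ : Irreducible π) (c : K) (hc : c ≠ 0) :
    ∃ (w : Rˣ) (m : ℤ), c = algebraMap R K w * algebraMap R K π ^ m := by
  have hinj := IsFractionRing.injective R K
  have hπK : algebraMap R K π ≠ 0 := by
    simpa using (map_ne_zero_of_mem_nonZeroDivisors _ hinj
      (mem_nonZeroDivisors_of_ne_zero hπ.ne_zero))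
  obtain ⟨a, b, hb, rfl⟩ := IsFractionRing.div_surjective (A := R) c
  have hbK : algebraMap R K b ≠ 0 := map_ne_zero_of_mem_nonZeroDivisors _ hinj hb
  have ha : a ≠ 0 := by
    rintro rfl; simp at hc
  have hb0 : b ≠ 0 := fun h => hbK (by rw [h, map_zero])
  obtain ⟨k, u₁, ha'⟩ := IsDiscreteValuationRing.eq_unit_mul_pow_irreducible ha hπ
  obtain ⟨l, u₂, hb'⟩ := IsDiscreteValuationRing.eq_unit_mul_pow_irreducible hb0 hπ
  refine ⟨u₁ * u₂⁻¹, (k : ℤ) - l, ?_⟩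
  have hu2 : algebraMap R K ((u₂ : R)) ≠ 0 := by
    intro h
    exact hbK (by rw [hb', map_mul, h, zero_mul])
  have hinvK : algebraMap R K (((u₂⁻¹ : Rˣ) : R)) = (algebraMap R K ((u₂ : R)))⁻¹ := by
    apply eq_inv_of_mul_eq_one_left
    rw [← map_mul, Units.inv_mul, map_one]
  rw [ha', hb', Units.val_mul, map_mul, map_mul, map_mul, map_pow, map_pow, hinvK,
    zpow_sub₀ hπK, zpow_natCast, zpow_natCast]
  field_simp

end



/-- Let `R` be a henselian discrete valuation ring whose residue field `κ` has characteristic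
not 2 and satisfies `cd₂(κ) ≤ 1`, expressed equivalently by: every conic `x² − αy² = β` with
`α, β ∈ κˣ` has a `κ`-point. Let `d ∈ Kˣ` with `v(d)` even and `d` not a square in `K`. Then
the nonzero values of `x² − d·y²` for `x, y ∈ K` are exactly the elements of `Kˣ` that are a
unit (of `R`) times a square (of `K`). -/
theorem stmt_3 (R K : Type*) [CommRing R] [IsDomain R] [IsDiscreteValuationRing R]
    [HenselianLocalRing R] [Field K] [Algebra R K] [IsFractionRing R K]
    (h2 : (2 : IsLocalRing.ResidueField R) ≠ 0)
    (hcd : ∀ α β : IsLocalRing.ResidueField R, α ≠ 0 → β ≠ 0 →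
      ∃ x y : IsLocalRing.ResidueField R, x ^ 2 - α * y ^ 2 = β)
    (π : R) (hπ : Irreducible π)
    (d : K) (u : Rˣ) (n : ℤ)
    (hd : d = algebraMap R K u * algebraMap R K π ^ n)
    (hn : Even n) (hdsq : ¬ IsSquare d) :
    {c : K | c ≠ 0 ∧ ∃ x y : K, x ^ 2 - d * y ^ 2 = c}
      = {c : K | c ≠ 0 ∧ ∃ (w : Rˣ) (z : K), c = algebraMap R K w * z ^ 2} := by
  have hinj := IsFractionRing.injective R K
  set t : K := algebraMap R K π with ht
  have hπK : t ≠ 0 := by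
    simpa [ht] using map_ne_zero_of_mem_nonZeroDivisors (algebraMap R K) hinj
      (mem_nonZeroDivisors_of_ne_zero hπ.ne_zero)
  obtain ⟨e, he⟩ := hn
  have hsq : ∀ m : ℤ, (t ^ m) ^ 2 = t ^ (2 * m) := fun m => by
    rw [← zpow_natCast (t ^ m) 2, ← zpow_mul]
    congr 1
    push_cast
    ring
  have hπ0 : residue R π = 0 := by
    by_contra h; exact hπ.not_isUnit ((residue_ne_zero_iff_isUnit π).mp h)
  have hd' : d = algebraMap R K (u : R) * (t ^ (e : ℤ)) ^ 2 := by
    rw [hd, he, hsq, two_mul]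
  have hte : t ^ (e : ℤ) ≠ 0 := zpow_ne_zero _ hπK
  ext c
  simp only [Set.mem_setOf_eq]
  constructor
  · rintro ⟨hc, x, y, hxy⟩
    refine ⟨hc, ?_⟩
    by_cases hy0 : y = 0
    · exact ⟨1, x, by rw [Units.val_one, map_one, one_mul, ← hxy, hy0]; ring⟩
    by_cases hx0 : x = 0
    · refine ⟨-u, t ^ (e : ℤ) * y, ?_⟩
      rw [Units.val_neg, map_neg, ← hxy, hx0, hd']
      ring
    obtain ⟨w₁, a, hxa⟩ := aux_decomp hπ x hx0
    obtain ⟨w₂, b, hyb⟩ := aux_decomp hπ (t ^ (e : ℤ) * y)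
      (mul_ne_zero hte hy0)
    have hdy : d * y ^ 2
        = algebraMap R K (u : R) * (algebraMap R K (w₂ : R) * t ^ b) ^ 2 := by
      rw [hd', ← hyb]; ring
    have hc2 : c = algebraMap R K ((w₁ : R) ^ 2) * t ^ (2 * a)
        - algebraMap R K ((u : R) * (w₂ : R) ^ 2) * t ^ (2 * b) := by
      rw [← hxy, hxa, hdy]
      simp only [map_mul, map_pow, mul_pow, ← ht, hsq]
      ring
    have hw1 : residue R ((w₁ : R)) ≠ 0 := (residue_ne_zero_iff_isUnit _).mpr w₁.isUnit
    have hw2 : residue R ((w₂ : R)) ≠ 0 := (residue_ne_zero_iff_isUnit _).mpr w₂.isUnit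
    have hu : residue R ((u : R)) ≠ 0 := (residue_ne_zero_iff_isUnit _).mpr u.isUnit
    rcases lt_trichotomy a b with hab | hab | hab
    · set k := (b - a).toNat with hk
      have hk1 : (k : ℤ) = b - a := Int.toNat_of_nonneg (by omega)
      have hv : IsUnit ((w₁ : R) ^ 2 - (u : R) * (w₂ : R) ^ 2 * π ^ (2 * k)) := by
        rw [← residue_ne_zero_iff_isUnit]
        rw [map_sub, map_mul, map_mul, map_pow, map_pow, map_pow, hπ0,
          zero_pow (by omega : 2 * k ≠ 0), mul_zero, sub_zero]
        exact pow_ne_zero 2 hw1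
      refine ⟨hv.unit, t ^ a, ?_⟩
      rw [IsUnit.unit_spec, hc2, hsq]
      have hbk : t ^ (2 * b) = t ^ (2 * a) * algebraMap R K (π ^ (2 * k)) := by
        rw [map_pow, ← ht, ← zpow_natCast t (2 * k), ← zpow_add₀ hπK]
        congr 1
        push_cast
        omega
      rw [hbk]
      simp only [map_sub, map_mul, map_pow]
      ring
    · by_cases hv : IsUnit ((w₁ : R) ^ 2 - (u : R) * (w₂ : R) ^ 2)
      · refine ⟨hv.unit, t ^ a, ?_⟩
        rw [IsUnit.unit_spec, hc2, hsq, ← hab]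
        simp only [map_sub, map_mul, map_pow]
        ring
      · exfalso
        apply hdsq
        have h0 : residue R ((w₁ : R) ^ 2 - (u : R) * (w₂ : R) ^ 2) = 0 := by
          by_contra h; exact hv ((residue_ne_zero_iff_isUnit _).mp h)
        have h0' : residue R ((w₁ : R)) ^ 2
            - residue R ((u : R)) * residue R ((w₂ : R)) ^ 2 = 0 := by
          rw [← map_pow, ← map_pow, ← map_mul, ← map_sub]; exact h0
        have huinv : residue R ((w₂⁻¹ : Rˣ) : R) * residue R ((w₂ : R)) = 1 := by
          rw [← map_mul, Units.inv_mul, map_one]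
        have hres : residue R ((w₁ : R) * ((w₂⁻¹ : Rˣ) : R)) ^ 2
            = residue R ((u : R)) := by
          rw [map_mul]
          linear_combination (residue R ((w₂⁻¹ : Rˣ) : R)) ^ 2 * h0'
            + (residue R ((u : R))
              * (residue R ((w₂⁻¹ : Rˣ) : R) * residue R ((w₂ : R)) + 1)) * huinv
        have hne : residue R ((w₁ : R) * ((w₂⁻¹ : Rˣ) : R)) ≠ 0 := by
          rw [show (w₁ : R) * ((w₂⁻¹ : Rˣ) : R) = ((w₁ * w₂⁻¹ : Rˣ) : R) from rfl]
          exact (residue_ne_zero_iff_isUnit _).mpr (w₁ * w₂⁻¹).isUnit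
        obtain ⟨s, hs⟩ := aux_hensel_sqrt h2 ((u : R)) _ hres hne
        refine ⟨algebraMap R K s * t ^ (e : ℤ), ?_⟩
        rw [hd', ← hs, map_pow]
        ring
    · set k := (a - b).toNat with hk
      have hk1 : (k : ℤ) = a - b := Int.toNat_of_nonneg (by omega)
      have hv : IsUnit ((w₁ : R) ^ 2 * π ^ (2 * k) - (u : R) * (w₂ : R) ^ 2) := by
        rw [← residue_ne_zero_iff_isUnit]
        rw [map_sub, map_mul, map_mul, map_pow, map_pow, map_pow, hπ0,
          zero_pow (by omega : 2 * k ≠ 0), mul_zero, zero_sub]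
        exact neg_ne_zero.mpr (mul_ne_zero hu (pow_ne_zero 2 hw2))
      refine ⟨hv.unit, t ^ b, ?_⟩
      rw [IsUnit.unit_spec, hc2, hsq]
      have hak : t ^ (2 * a) = t ^ (2 * b) * algebraMap R K (π ^ (2 * k)) := by
        rw [map_pow, ← ht, ← zpow_natCast t (2 * k), ← zpow_add₀ hπK]
        congr 1
        push_cast
        omega
      rw [hak]
      simp only [map_sub, map_mul, map_pow]
      ring
  · rintro ⟨hc, w, z, hz⟩
    refine ⟨hc, ?_⟩
    obtain ⟨x₀, y₀, hrep⟩ := aux_rep_unit h2 hcd u w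
    refine ⟨algebraMap R K x₀ * z, algebraMap R K y₀ * z * (t ^ (e : ℤ))⁻¹, ?_⟩
    have hrepK : (algebraMap R K x₀) ^ 2
        - algebraMap R K (u : R) * (algebraMap R K y₀) ^ 2 = algebraMap R K (w : R) := by
      rw [← map_pow, ← map_pow, ← map_mul, ← map_sub, hrep]
    rw [hd', hz]
    field_simp
    linear_combination z ^ 2 * hrepK
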